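/- If S and T are infinite extremally disconnected compact Hausdorff topological spaces, then the product space S × T (with the product topology) is not extremally disconnected. -/

import Mathlib

open Set Filter Topology

/-- Step lemma: an infinite open set in a totally separated space splits off a nonempty
open piece disjoint from a remaining infinite open piece. -/
lemma step_aux {X : Type*} [TopologicalSpace X] [TotallySeparatedSpace X]
    (C : Set X) (hC : IsOpen C) (hinf : C.Infinite) :
    ∃ U D : Set X, IsOpen U ∧ U.Nonempty ∧ IsOpen D ∧ D.Infinite ∧ Disjoint U D ∧ U ⊆ C ∧ D ⊆ C := by
  obtain ⟨x, hx, y, hy, hxy⟩ := hinf.nontrivial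
  obtain ⟨u, v, hu, hv, hxu, hyv, hcover, hdisj⟩ :=
    TotallySeparatedSpace.isTotallySeparated_univ (α := X) (mem_univ x) (mem_univ y) hxy
  have hsplit : C ⊆ (C ∩ u) ∪ (C ∩ v) := by
    intro z hz
    rcases hcover (mem_univ z) with h | h
    · exact Or.inl ⟨hz, h⟩
    · exact Or.inr ⟨hz, h⟩
  rcases (hinf.mono hsplit).mono (le_refl _) |>.mono (le_refl _) |> Set.infinite_union.mp with h | h
  · exact ⟨C ∩ v, C ∩ u, hC.inter hv, ⟨y, hy, hyv⟩, hC.inter hu, h,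
      (hdisj.symm.mono inter_subset_right inter_subset_right),
      inter_subset_left, inter_subset_left⟩
  · exact ⟨C ∩ u, C ∩ v, hC.inter hu, ⟨x, hx, hxu⟩, hC.inter hv, h,
      (hdisj.mono inter_subset_right inter_subset_right),
      inter_subset_left, inter_subset_left⟩

/-- In an infinite totally separated space there is a countable pairwise disjoint family of
nonempty open sets. -/
lemma exists_disjoint_opens {X : Type*} [TopologicalSpace X] [TotallySeparatedSpace X]
    [Infinite X] :
    ∃ U : ℕ → Set X, (∀ n, IsOpen (U n)) ∧ (∀ n, (U n).Nonempty) ∧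
      Pairwise (Function.onFun Disjoint U) := by
  choose! U D hUopen hUne hDopen hDinf hdisj hUC hDC using
    fun (C : Set X) (h : IsOpen C ∧ C.Infinite) => step_aux C h.1 h.2
  set C : ℕ → Set X := fun n => D^[n] Set.univ with hCdef
  have hC : ∀ n, IsOpen (C n) ∧ (C n).Infinite := by
    intro n
    induction n with
    | zero => exact ⟨isOpen_univ, Set.infinite_univ⟩
    | succ k ih =>
      have : C (k+1) = D (C k) := by
        simp [hCdef, Function.iterate_succ_apply']
      rw [this]
      exact ⟨hDopen _ ih, hDinf _ ih⟩
  have hCsucc : ∀ n, C (n+1) = D (C n) := fun n => by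
    simp [hCdef, Function.iterate_succ_apply']
  have hCanti : ∀ m n, m ≤ n → C n ⊆ C m := by
    intro m n h
    induction n with
    | zero => simp_all
    | succ k ih =>
      rcases Nat.lt_or_ge m (k+1) with h' | h'
      · have : C (k+1) ⊆ C k := by rw [hCsucc]; exact hDC _ (hC k)
        exact (this.trans (ih (Nat.lt_succ_iff.mp h')))
      · have : m = k + 1 := le_antisymm h h'
        subst this; rfl
  refine ⟨fun n => U (C n), fun n => hUopen _ (hC n), fun n => hUne _ (hC n), ?_⟩
  have key : ∀ m n, m < n → Disjoint (U (C m)) (U (C n)) := by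
    intro m n hmn
    have h1 : U (C n) ⊆ C (m+1) := (hUC _ (hC n)).trans (hCanti _ _ hmn)
    have h2 : C (m+1) = D (C m) := hCsucc m
    exact ((hdisj _ (hC m)).mono_right (h2 ▸ h1))
  intro m n hmn
  rcases lt_or_gt_of_ne hmn with h | h
  · exact key m n h
  · exact (key n m h).symm


/-- If `S` and `T` are infinite extremally disconnected compact Hausdorff
topological spaces, then the product space `S × T` (with the product topology) is not
extremally disconnected. -/
theorem stmt_0 (S T : Type*) [TopologicalSpace S] [TopologicalSpace T]
    [CompactSpace S] [T2Space S] [ExtremallyDisconnected S] [Infinite S]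
    [CompactSpace T] [T2Space T] [ExtremallyDisconnected T] [Infinite T] :
    ¬ ExtremallyDisconnected (S × T) := by
  intro hED
  obtain ⟨U, hUopen, hUne, hUdisj⟩ := exists_disjoint_opens (X := S)
  obtain ⟨V, hVopen, hVne, hVdisj⟩ := exists_disjoint_opens (X := T)
  choose s hs using hUne
  choose t ht using hVne
  -- the two disjoint open sets
  set A : Set (S × T) := ⋃ (p : ℕ × ℕ) (_ : p.1 < p.2), U p.1 ×ˢ V p.2 with hAdef
  set B : Set (S × T) := ⋃ (p : ℕ × ℕ) (_ : p.2 < p.1), U p.1 ×ˢ V p.2 with hBdef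
  have hAopen : IsOpen A := isOpen_iUnion fun p => isOpen_iUnion fun _ =>
    (hUopen p.1).prod (hVopen p.2)
  have hBopen : IsOpen B := isOpen_iUnion fun p => isOpen_iUnion fun _ =>
    (hUopen p.1).prod (hVopen p.2)
  have hABdisj : Disjoint A B := by
    rw [Set.disjoint_left]
    rintro ⟨a, b⟩ hA hB
    simp only [hAdef, hBdef, Set.mem_iUnion, Set.mem_prod] at hA hB
    obtain ⟨⟨n, m⟩, hnm, han, hbm⟩ := hA
    obtain ⟨⟨n', m'⟩, hnm', han', hbm'⟩ := hB
    have hn : n = n' := by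
      by_contra h
      exact (hUdisj h).le_bot ⟨han, han'⟩
    have hm : m = m' := by
      by_contra h
      exact (hVdisj h).le_bot ⟨hbm, hbm'⟩
    omega
  have hclos := ExtremallyDisconnected.disjoint_closure_of_disjoint_isOpen hABdisj hAopen hBopen
  -- a cluster point of the diagonal sequence
  obtain ⟨z, hz⟩ := exists_clusterPt_of_compactSpace
    (Filter.map (fun n => (s n, t n)) Filter.atTop)
  have hfreq : ∀ O ∈ 𝓝 z, ∃ᶠ n in Filter.atTop, (s n, t n) ∈ O :=
    mapClusterPt_iff_frequently.mp (mapClusterPt_def.mpr hz)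
  -- z is in the closure of both A and B
  have hmem : ∀ W : Set (S × T), ∀ g : ℕ → ℕ → S × T,
      (∀ n m, n < m → g n m ∈ W) →
      (∀ n m, (g n m).1 = s n ∧ (g n m).2 = t m ∨ (g n m).1 = s m ∧ (g n m).2 = t n) →
      z ∈ closure W := by
    intro W g hW hg
    rw [mem_closure_iff_nhds]
    intro O hO
    obtain ⟨z1, z2⟩ := z
    rw [nhds_prod_eq, Filter.mem_prod_iff] at hO
    obtain ⟨P, hP, Q, hQ, hPQ⟩ := hO
    have hPQn : P ×ˢ Q ∈ 𝓝 (z1, z2) := by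
      rw [nhds_prod_eq]; exact Filter.prod_mem_prod hP hQ
    obtain ⟨n, -, hn⟩ := Filter.frequently_atTop.mp (hfreq _ hPQn) 0
    obtain ⟨m, hm, hm'⟩ := Filter.frequently_atTop.mp (hfreq _ hPQn) (n + 1)
    have hnm : n < m := by omega
    refine ⟨g n m, hPQ ?_, hW n m hnm⟩
    rcases hg n m with ⟨h1, h2⟩ | ⟨h1, h2⟩
    · exact ⟨by rw [h1]; exact hn.1, by rw [h2]; exact hm'.2⟩
    · exact ⟨by rw [h1]; exact hm'.1, by rw [h2]; exact hn.2⟩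
  have hA : z ∈ closure A := by
    refine hmem A (fun n m => (s n, t m)) (fun n m hnm => ?_) (fun n m => Or.inl ⟨rfl, rfl⟩)
    exact Set.mem_iUnion.mpr ⟨(n, m), Set.mem_iUnion.mpr ⟨hnm, ⟨hs n, ht m⟩⟩⟩
  have hB : z ∈ closure B := by
    refine hmem B (fun n m => (s m, t n)) (fun n m hnm => ?_) (fun n m => Or.inr ⟨rfl, rfl⟩)
    exact Set.mem_iUnion.mpr ⟨(m, n), Set.mem_iUnion.mpr ⟨hnm, ⟨hs m, ht n⟩⟩⟩
  exact hclos.le_bot ⟨hA, hB⟩
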